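/- Let G be a simple graph and let G′ be the cone over G, i.e., the graph obtained from G by adding one new vertex v adjacent to every vertex of G. If G → (3,3)^v, then G′ → (3,3)^e. -/

import Mathlib

/-- `G → (3,3)ᵛ`: every 2-coloring of the vertices of `G` contains three pairwise
adjacent vertices of the same color. -/
def VertexArrows33 {V : Type*} (G : SimpleGraph V) : Prop :=
  ∀ c : V → Bool, ∃ x y z : V,
    G.Adj x y ∧ G.Adj x z ∧ G.Adj y z ∧ c x = c y ∧ c y = c z

/-- `G → (3,3)ᵉ`: every 2-coloring of the edges of `G` contains three pairwise adjacent
vertices whose three connecting edges all have the same color. -/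
def EdgeArrows33 {V : Type*} (G : SimpleGraph V) : Prop :=
  ∀ c : Sym2 V → Bool, ∃ x y z : V,
    G.Adj x y ∧ G.Adj x z ∧ G.Adj y z ∧
    c s(x, y) = c s(x, z) ∧ c s(x, z) = c s(y, z)

/-- The cone over `G`: a new vertex (`none`) adjacent to every vertex of `G`. -/
def cone {V : Type*} (G : SimpleGraph V) : SimpleGraph (Option V) :=
  SimpleGraph.fromRel
    (fun x y => x = none ∨ ∃ u v, x = some u ∧ y = some v ∧ G.Adj u v)

theorem stmt_4 {V : Type*} (G : SimpleGraph V) (h : VertexArrows33 G) :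
    EdgeArrows33 (cone G) := by
  intro c
  have hadj_ns : ∀ u : V, (cone G).Adj none (some u) := by
    intro u
    exact ⟨by simp, Or.inl (Or.inl rfl)⟩
  have hadj_ss : ∀ u v : V, G.Adj u v → (cone G).Adj (some u) (some v) := by
    intro u v huv
    refine ⟨by simp [huv.ne], Or.inl (Or.inr ⟨u, v, rfl, rfl, huv⟩)⟩
  obtain ⟨x, y, z, hxy, hxz, hyz, h1, h2⟩ := h (fun u => c s(none, some u))
  by_cases e1 : c s(some x, some y) = c s(none, some x)
  · exact ⟨none, some x, some y, hadj_ns x, hadj_ns y, hadj_ss x y hxy,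
      by grind, by grind⟩
  by_cases e2 : c s(some x, some z) = c s(none, some x)
  · exact ⟨none, some x, some z, hadj_ns x, hadj_ns z, hadj_ss x z hxz,
      by grind, by grind⟩
  by_cases e3 : c s(some y, some z) = c s(none, some x)
  · exact ⟨none, some y, some z, hadj_ns y, hadj_ns z, hadj_ss y z hyz,
      by grind, by grind⟩
  · refine ⟨some x, some y, some z, hadj_ss x y hxy, hadj_ss x z hxz, hadj_ss y z hyz, ?_, ?_⟩
    · cases hb : c s(none, some x) <;>
        simp [hb] at e1 e2 <;> rw [e1, e2]
    · cases hb : c s(none, some x) <;>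
        simp [hb] at e2 e3 <;> rw [e2, e3]
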